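/- Every special unitary matrix U in SU(n) can be written as U = Θ₁ · D · Θ₂, where Θ₁, Θ₂ are real special orthogonal matrices in SO(n) and D = diag(exp(-iλ₁), ..., exp(-iλₙ)) is a diagonal unitary matrix with real λ₁, ..., λₙ satisfying λ₁ + ... + λₙ = 0. -/

import Mathlib

open Matrix Complex
open Module.End

lemma simul_diag {E : Type} [NormedAddCommGroup E] [InnerProductSpace ℝ E]
    [FiniteDimensional ℝ E] {n : ℕ} (hn : Module.finrank ℝ E = n) {T S : E →ₗ[ℝ] E}
    (hT : T.IsSymmetric) (hS : S.IsSymmetric) (hc : ∀ x, T (S x) = S (T x)) :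
    ∃ (b : OrthonormalBasis (Fin n) ℝ E) (f g : Fin n → ℝ),
      ∀ i, T (b i) = f i • b i ∧ S (b i) = g i • b i := by
  classical
  have hint := hT.direct_sum_isInternal
  have hpres : ∀ μ : Eigenvalues T, ∀ v ∈ eigenspace T (μ : ℝ), S v ∈ eigenspace T (μ : ℝ) := by
    intro μ v hv
    rw [mem_eigenspace_iff] at hv ⊢
    rw [hc, hv, _root_.map_smul]
  have hSres : ∀ μ : Eigenvalues T, (S.restrict (hpres μ)).IsSymmetric :=
    fun μ => hS.restrict_invariant (hpres μ)
  let bfam : ∀ μ : Eigenvalues T,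
      OrthonormalBasis (Fin (Module.finrank ℝ (eigenspace T (μ : ℝ)))) ℝ (eigenspace T (μ : ℝ)) :=
    fun μ => (hSres μ).eigenvectorBasis rfl
  let b0 := hint.collectedOrthonormalBasis hT.orthogonalFamily_eigenspaces' bfam
  have hb0 : ∀ p, b0 p = (bfam p.1 p.2 : E) := by
    intro p
    simp [b0, DirectSum.IsInternal.collectedOrthonormalBasis, Module.Basis.coe_toOrthonormalBasis,
      DirectSum.IsInternal.collectedBasis_coe]
  have hcard : Fintype.card (Σ μ : Eigenvalues T, Fin (Module.finrank ℝ (eigenspace T (μ : ℝ)))) = n := by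
    rw [← hn, Module.finrank_eq_card_basis b0.toBasis]
  let e := Fintype.equivFinOfCardEq hcard
  refine ⟨b0.reindex e, fun i => ((e.symm i).1 : ℝ),
    fun i => (hSres (e.symm i).1).eigenvalues rfl (e.symm i).2, fun i => ?_⟩
  rw [OrthonormalBasis.coe_reindex]
  have h1 := hb0 (e.symm i)
  constructor
  · rw [Function.comp_apply, h1]
    have := (bfam (e.symm i).1 (e.symm i).2).2
    rw [mem_eigenspace_iff] at this
    exact this
  · rw [Function.comp_apply, h1]
    have h2 := (hSres (e.symm i).1).apply_eigenvectorBasis rfl (e.symm i).2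
    have : S ((bfam (e.symm i).1 (e.symm i).2 : E)) =
        ((S.restrict (hpres (e.symm i).1)) (bfam (e.symm i).1 (e.symm i).2) : E) := rfl
    rw [this, h2]
    simp [bfam]

lemma matrix_simul_diag {n : ℕ} {X Y : Matrix (Fin n) (Fin n) ℝ}
    (hX : X.IsHermitian) (hY : Y.IsHermitian) (hc : X * Y = Y * X) :
    ∃ Θ : Matrix (Fin n) (Fin n) ℝ, Θᵀ * Θ = 1 ∧ ∃ f g : Fin n → ℝ,
      X = Θ * Matrix.diagonal f * Θᵀ ∧ Y = Θ * Matrix.diagonal g * Θᵀ := by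
  classical
  have hrank : Module.finrank ℝ (EuclideanSpace ℝ (Fin n)) = n := finrank_euclideanSpace_fin
  have hT : (Matrix.toEuclideanLin X).IsSymmetric := (Matrix.isHermitian_iff_isSymmetric).mp hX
  have hS : (Matrix.toEuclideanLin Y).IsSymmetric := (Matrix.isHermitian_iff_isSymmetric).mp hY
  have hcomm : ∀ v, (Matrix.toEuclideanLin X) ((Matrix.toEuclideanLin Y) v)
      = (Matrix.toEuclideanLin Y) ((Matrix.toEuclideanLin X) v) := by
    intro v
    simp only [Matrix.toEuclideanLin_apply]
    simp [Matrix.mulVec_mulVec, hc]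
  obtain ⟨b, f, g, hb⟩ := simul_diag hrank hT hS hcomm
  set Θ : Matrix (Fin n) (Fin n) ℝ := Matrix.of (fun i j => b j i) with hΘdef
  have hortho : Θᵀ * Θ = 1 := by
    ext j k
    have := b.orthonormal
    rw [orthonormal_iff_ite] at this
    have h2 := this j k
    rw [PiLp.inner_apply] at h2
    simp only [RCLike.inner_apply, starRingEnd_apply, star_trivial] at h2
    simpa [Matrix.mul_apply, Matrix.one_apply, mul_comm, hΘdef] using h2
  have hortho' : Θ * Θᵀ = 1 := mul_eq_one_comm.mp hortho
  have key : ∀ (M : Matrix (Fin n) (Fin n) ℝ) (c : Fin n → ℝ),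
      (∀ j, Matrix.toEuclideanLin M (b j) = c j • b j) →
      M = Θ * Matrix.diagonal c * Θᵀ := by
    intro M c h
    have h1 : M * Θ = Θ * Matrix.diagonal c := by
      ext i j
      have h2 := congrArg (fun v => WithLp.equiv 2 (Fin n → ℝ) v i) (h j)
      change (M *ᵥ (WithLp.equiv 2 (Fin n → ℝ)) (b j)) i = c j * (WithLp.equiv 2 (Fin n → ℝ)) (b j) i at h2
      have hlhs : (M * Θ) i j = (M *ᵥ (WithLp.equiv 2 (Fin n → ℝ)) (b j)) i := by
        simp [Matrix.mul_apply, Matrix.mulVec, dotProduct, hΘdef]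
      rw [hlhs, h2]
      simp [Matrix.mul_diagonal, hΘdef, mul_comm]
    calc M = M * (Θ * Θᵀ) := by rw [hortho', mul_one]
    _ = (M * Θ) * Θᵀ := by rw [mul_assoc]
    _ = Θ * Matrix.diagonal c * Θᵀ := by rw [h1]
  exact ⟨Θ, hortho, f, g, key X f (fun j => (hb j).1), key Y g (fun j => (hb j).2)⟩

/-- Every `U ∈ SU(n)` factors as `Θ₁ ⬝ diag(exp(-i λ₁), …, exp(-i λₙ)) ⬝ Θ₂`
with `Θ₁, Θ₂ ∈ SO(n)` real special orthogonal and `∑ λᵢ = 0`. -/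
theorem su_so_diag_so_decomposition (n : ℕ) (U : Matrix (Fin n) (Fin n) ℂ)
    (hU : U ∈ Matrix.unitaryGroup (Fin n) ℂ) (hdet : U.det = 1) :
    ∃ (Θ₁ Θ₂ : Matrix (Fin n) (Fin n) ℝ) (lam : Fin n → ℝ),
      Θ₁ ∈ Matrix.orthogonalGroup (Fin n) ℝ ∧ Θ₁.det = 1 ∧
      Θ₂ ∈ Matrix.orthogonalGroup (Fin n) ℝ ∧ Θ₂.det = 1 ∧
      (∑ i, lam i) = 0 ∧
      U = (Θ₁.map (Complex.ofReal)) *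
            Matrix.diagonal (fun i => Complex.exp (-(Complex.I * (lam i)))) *
          (Θ₂.map (Complex.ofReal)) := by
  classical
  rcases Nat.eq_zero_or_pos n with hn | hn
  · subst hn
    exact ⟨1, 1, fun _ => 0, Submonoid.one_mem _, Matrix.det_one, Submonoid.one_mem _,
      Matrix.det_one, by simp, Subsingleton.elim _ _⟩
  have hU1 : star U * U = 1 := (Unitary.mem_iff.mp hU).1
  have hU2 : U * star U = 1 := (Unitary.mem_iff.mp hU).2
  set S : Matrix (Fin n) (Fin n) ℂ := U * Uᵀ with hSdef
  have hSsymm : Sᵀ = S := by rw [hSdef, Matrix.transpose_mul, Matrix.transpose_transpose]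
  have hsym' : ∀ i j, S j i = S i j := fun i j =>
    (congrFun (congrFun hSsymm j) i).symm.trans (Matrix.transpose_apply S j i)
  have hstarT : ∀ M : Matrix (Fin n) (Fin n) ℂ, star (Mᵀ) = (star M)ᵀ := by
    intro M
    ext i j
    simp [Matrix.star_apply, Matrix.transpose_apply]
  have hS1 : S * star S = 1 := by
    rw [hSdef, Matrix.star_mul, hstarT]
    rw [Matrix.mul_assoc, ← Matrix.mul_assoc Uᵀ, ← Matrix.transpose_mul, hU1,
      Matrix.transpose_one, one_mul, hU2]
  have hS2 : star S * S = 1 := mul_eq_one_comm.mp hS1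
  set X : Matrix (Fin n) (Fin n) ℝ := Matrix.of (fun i j => (S i j).re) with hXdef
  set Y : Matrix (Fin n) (Fin n) ℝ := Matrix.of (fun i j => (S i j).im) with hYdef
  set A : Matrix (Fin n) (Fin n) ℂ := X.map Complex.ofReal with hAdef
  set B : Matrix (Fin n) (Fin n) ℂ := Y.map Complex.ofReal with hBdef
  have hSAB : S = A + Complex.I • B := by
    ext i j
    simp [hAdef, hBdef, hXdef, hYdef, Matrix.add_apply, Matrix.smul_apply, Matrix.map_apply,
      Complex.ext_iff]
  have hstarS : star S = A - Complex.I • B := by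
    ext i j
    rw [Matrix.star_eq_conjTranspose, Matrix.conjTranspose_apply, hsym' i j]
    simp [hAdef, hBdef, hXdef, hYdef, Matrix.sub_apply, Matrix.smul_apply, Matrix.map_apply,
      Complex.ext_iff]
  -- commutation of A and B
  have hSS : (A + Complex.I • B) * (A - Complex.I • B)
      = (A - Complex.I • B) * (A + Complex.I • B) := by
    rw [← hSAB, ← hstarS, hS1, hS2]
  have hAB : A * B = B * A := by
    have key : ∀ a b c d : ℂ, (a + Complex.I * b) * (c - Complex.I * d)
        - (a - Complex.I * b) * (c + Complex.I * d)
        = 2 * Complex.I * (b * c - a * d) := fun a b c d => by ring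
    ext i j
    have h6 := congrFun (congrFun hSS i) j
    simp only [Matrix.mul_apply, Matrix.add_apply, Matrix.sub_apply, Matrix.smul_apply,
      smul_eq_mul] at h6
    have h8 : ∑ k, ((A i k + Complex.I * B i k) * (A k j - Complex.I * B k j)
        - (A i k - Complex.I * B i k) * (A k j + Complex.I * B k j)) = 0 := by
      rw [Finset.sum_sub_distrib, h6, sub_self]
    simp only [key] at h8
    rw [← Finset.mul_sum, mul_eq_zero] at h8
    rcases h8 with h8 | h8
    · exfalso
      simp [Complex.I_ne_zero] at h8
    · rw [Finset.sum_sub_distrib, sub_eq_zero] at h8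
      simp only [Matrix.mul_apply]
      exact h8.symm
  have mapmul : ∀ P Q : Matrix (Fin n) (Fin n) ℝ,
      (P * Q).map Complex.ofReal = P.map Complex.ofReal * Q.map Complex.ofReal := fun P Q =>
    Matrix.map_mul (f := Complex.ofRealHom)
  have mapone : (1 : Matrix (Fin n) (Fin n) ℝ).map Complex.ofReal = 1 :=
    Matrix.map_one _ Complex.ofReal_zero Complex.ofReal_one
  have maptrans : ∀ P : Matrix (Fin n) (Fin n) ℝ,
      (Pᵀ).map Complex.ofReal = (P.map Complex.ofReal)ᵀ := fun P => Matrix.transpose_map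
  have mapdiag : ∀ c : Fin n → ℝ,
      (Matrix.diagonal c).map Complex.ofReal = Matrix.diagonal (fun j => (c j : ℂ)) := fun c =>
    Matrix.diagonal_map Complex.ofReal_zero
  have hXY : X * Y = Y * X := by
    have h8 : (X * Y).map Complex.ofReal = (Y * X).map Complex.ofReal := by
      rw [mapmul, mapmul]
      exact hAB
    exact Matrix.map_injective Complex.ofReal_injective h8
  have hXh : X.IsHermitian := by
    ext i j
    simp only [Matrix.conjTranspose_apply, hXdef, Matrix.of_apply, star_trivial]
    exact congrArg Complex.re (hsym' i j)
  have hYh : Y.IsHermitian := by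
    ext i j
    simp only [Matrix.conjTranspose_apply, hYdef, Matrix.of_apply, star_trivial]
    exact congrArg Complex.im (hsym' i j)
  obtain ⟨Θ, hΘ, f, g, hXd, hYd⟩ := matrix_simul_diag hXh hYh hXY
  have hΘ' : Θ * Θᵀ = 1 := mul_eq_one_comm.mp hΘ
  -- complexification helpers
  set Θc : Matrix (Fin n) (Fin n) ℂ := Θ.map Complex.ofReal with hΘcdef
  have hΘc1 : Θcᵀ * Θc = 1 := by rw [hΘcdef, ← maptrans, ← mapmul, hΘ, mapone]
  have hΘc2 : Θc * Θcᵀ = 1 := by rw [hΘcdef, ← maptrans, ← mapmul, hΘ', mapone]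
  have hstarΘc : star Θc = Θcᵀ := by
    ext i j
    simp [Matrix.star_apply, hΘcdef, Matrix.map_apply, Complex.conj_ofReal,
      Matrix.transpose_apply]
  set μ : Fin n → ℂ := fun j => (f j : ℂ) + Complex.I * (g j : ℂ) with hμdef
  have hSdec : S = Θc * Matrix.diagonal μ * Θcᵀ := by
    have hA : A = Θc * Matrix.diagonal (fun j => (f j : ℂ)) * Θcᵀ := by
      rw [hAdef, hXd, mapmul, mapmul, maptrans, mapdiag, hΘcdef]
    have hB : B = Θc * Matrix.diagonal (fun j => (g j : ℂ)) * Θcᵀ := by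
      rw [hBdef, hYd, mapmul, mapmul, maptrans, mapdiag, hΘcdef]
    have hdiagsum : Matrix.diagonal (fun j => (f j : ℂ))
        + Complex.I • Matrix.diagonal (fun j => (g j : ℂ)) = Matrix.diagonal μ := by
      rw [← Matrix.diagonal_smul, ← Matrix.diagonal_add]
      rfl
    rw [hSAB, hA, hB, ← hdiagsum]
    simp only [mul_add, add_mul, mul_smul_comm, smul_mul_assoc]
  have hdiagμeq : Matrix.diagonal μ = Θcᵀ * S * Θc := by
    rw [hSdec]
    rw [Matrix.mul_assoc, Matrix.mul_assoc, hΘc1, mul_one, ← Matrix.mul_assoc, hΘc1, one_mul]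
  have hdiagunit : Matrix.diagonal μ * Matrix.diagonal (fun j => star (μ j)) = 1 := by
    have hstardiag : Matrix.diagonal (fun j => star (μ j)) = Θcᵀ * star S * Θc := by
      have : star (Matrix.diagonal μ) = Matrix.diagonal (fun j => star (μ j)) := by
        rw [Matrix.star_eq_conjTranspose, Matrix.diagonal_conjTranspose]
        rfl
      rw [← this, hdiagμeq, Matrix.star_mul, Matrix.star_mul, hstarT, hstarΘc,
        Matrix.transpose_transpose]
      rw [Matrix.mul_assoc]
    rw [hdiagμeq, hstardiag]
    calc Θcᵀ * S * Θc * (Θcᵀ * star S * Θc)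
        = Θcᵀ * S * (Θc * Θcᵀ) * star S * Θc := by simp only [Matrix.mul_assoc]
      _ = Θcᵀ * (S * star S) * Θc := by rw [hΘc2]; simp only [Matrix.mul_assoc, Matrix.one_mul]
      _ = 1 := by rw [hS1, mul_one, hΘc1]
  have hμabs : ∀ j, ‖μ j‖ = 1 := by
    intro j
    have h9 := congrFun (congrFun hdiagunit j) j
    rw [Matrix.diagonal_mul_diagonal] at h9
    have h10 : μ j * star (μ j) = 1 := by
      simpa [Matrix.diagonal_apply_eq, Matrix.one_apply_eq] using h9
    have h11 : (Complex.normSq (μ j) : ℂ) = 1 := by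
      rw [← Complex.mul_conj]; exact h10
    have h12 : Complex.normSq (μ j) = 1 := by exact_mod_cast h11
    rw [Complex.norm_def, h12, Real.sqrt_one]
  set lam0 : Fin n → ℝ := fun j => -(μ j).arg / 2 with hlam0def
  have hexpμ : ∀ j, Complex.exp (Complex.I * ((μ j).arg : ℂ)) = μ j := by
    intro j
    have h13 := Complex.norm_mul_exp_arg_mul_I (μ j)
    rw [hμabs j] at h13
    rw [mul_comm]
    simpa using h13
  set e : Fin n → ℂ := fun j => Complex.exp (-(Complex.I * ((lam0 j : ℝ) : ℂ))) with hedef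
  set e' : Fin n → ℂ := fun j => Complex.exp (Complex.I * ((lam0 j : ℝ) : ℂ)) with he'def
  have hee' : ∀ j, e j * e' j = 1 := by
    intro j
    rw [hedef, he'def, ← Complex.exp_add]
    simp
  have hesq : ∀ j, e j * e j = μ j := by
    intro j
    rw [hedef, ← Complex.exp_add, ← hexpμ j]
    congr 1
    push_cast [hlam0def]
    ring
  have he'μ : ∀ j, e' j * μ j * e' j = 1 := by
    intro j
    rw [he'def, ← hexpμ j, ← Complex.exp_add, ← Complex.exp_add, ← Complex.exp_zero]
    congr 1
    push_cast [hlam0def]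
    ring
  set D0 : Matrix (Fin n) (Fin n) ℂ := Matrix.diagonal e with hD0def
  set D0inv : Matrix (Fin n) (Fin n) ℂ := Matrix.diagonal e' with hD0invdef
  have cancel : ∀ (P Q Z : Matrix (Fin n) (Fin n) ℂ), P * Q = 1 → P * (Q * Z) = Z := by
    intro P Q Z h
    rw [← Matrix.mul_assoc, h, Matrix.one_mul]
  have hD0a : D0 * D0inv = 1 := by
    rw [hD0def, hD0invdef, Matrix.diagonal_mul_diagonal]
    rw [show (fun j => e j * e' j) = fun _ => (1 : ℂ) from funext hee', Matrix.diagonal_one]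
  have hD0b : D0inv * D0 = 1 := mul_eq_one_comm.mp hD0a
  have hDinvμ : D0inv * Matrix.diagonal μ * D0inv = 1 := by
    rw [hD0invdef, Matrix.diagonal_mul_diagonal, Matrix.diagonal_mul_diagonal]
    rw [show (fun j => e' j * μ j * e' j) = fun _ => (1 : ℂ) from
      funext (fun j => by rw [← he'μ j]), Matrix.diagonal_one]
  set Θ₂c : Matrix (Fin n) (Fin n) ℂ := D0inv * Θcᵀ * U with hΘ₂cdef
  have hfact : U = Θc * D0 * Θ₂c := by
    rw [hΘ₂cdef]
    simp only [Matrix.mul_assoc]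
    rw [← Matrix.mul_assoc D0 D0inv, hD0a, Matrix.one_mul, ← Matrix.mul_assoc, hΘc2,
      Matrix.one_mul]
  have hT2t : Θ₂cᵀ = Uᵀ * (Θc * D0invᵀ) := by
    rw [hΘ₂cdef, Matrix.transpose_mul, Matrix.transpose_mul, Matrix.transpose_transpose]
  have hD0invT : D0invᵀ = D0inv := by rw [hD0invdef, Matrix.diagonal_transpose]
  have hrow : Θ₂c * Θ₂cᵀ = 1 := by
    rw [hT2t, hD0invT, hΘ₂cdef]
    simp only [Matrix.mul_assoc]
    rw [← Matrix.mul_assoc U Uᵀ, ← hSdef, hSdec]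
    simp only [Matrix.mul_assoc]
    rw [cancel _ _ _ hΘc1, cancel _ _ _ hΘc1, ← Matrix.mul_assoc, hDinvμ]
  have hstarD0inv : star D0inv = D0 := by
    have he'star : star e' = e := by
      funext j
      show star (e' j) = e j
      rw [he'def, hedef]
      simp only [Complex.star_def, ← Complex.exp_conj, _root_.map_mul, Complex.conj_I,
        Complex.conj_ofReal, neg_mul]
    rw [hD0invdef, hD0def, Matrix.star_eq_conjTranspose, Matrix.diagonal_conjTranspose, he'star]
  have hstarΘ₂ : star Θ₂c = star U * (Θc * D0) := by
    rw [hΘ₂cdef, Matrix.star_mul, Matrix.star_mul, hstarT, hstarΘc, Matrix.transpose_transpose,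
      hstarD0inv]
  have hstar2 : Θ₂c * star Θ₂c = 1 := by
    rw [hstarΘ₂, hΘ₂cdef]
    simp only [Matrix.mul_assoc]
    rw [cancel _ _ _ hU2, cancel _ _ _ hΘc1, hD0b]
  have hcolstar : star Θ₂c * Θ₂c = 1 := mul_eq_one_comm.mp hstar2
  have hcolT : Θ₂cᵀ * Θ₂c = 1 := mul_eq_one_comm.mp hrow
  have hstar_eq : star Θ₂c = Θ₂cᵀ := by
    calc star Θ₂c = star Θ₂c * (Θ₂c * Θ₂cᵀ) := by rw [hrow, Matrix.mul_one]
      _ = star Θ₂c * Θ₂c * Θ₂cᵀ := (Matrix.mul_assoc _ _ _).symm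
      _ = Θ₂cᵀ := by rw [hcolstar, Matrix.one_mul]
  set Θ₂r : Matrix (Fin n) (Fin n) ℝ := Matrix.of (fun i j => (Θ₂c i j).re) with hΘ₂rdef
  have hmap2 : Θ₂r.map Complex.ofReal = Θ₂c := by
    ext i j
    have h15 : (starRingEnd ℂ) (Θ₂c i j) = Θ₂c i j := by
      have h14 := congrFun (congrFun hstar_eq j) i
      simpa [Matrix.star_apply, Matrix.transpose_apply] using h14
    simp only [Matrix.map_apply, hΘ₂rdef, Matrix.of_apply]
    exact Complex.conj_eq_iff_re.mp h15
  have hΘ₂orth : Θ₂r * Θ₂rᵀ = 1 := by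
    apply Matrix.map_injective Complex.ofReal_injective
    show (Θ₂r * Θ₂rᵀ).map Complex.ofReal = (1 : Matrix (Fin n) (Fin n) ℝ).map Complex.ofReal
    rw [mapmul, maptrans, hmap2, hrow, mapone]
  -- determinant bookkeeping
  set i₀ : Fin n := ⟨0, hn⟩ with hi₀def
  have cancelR : ∀ (P Q Z : Matrix (Fin n) (Fin n) ℝ), P * Q = 1 → P * (Q * Z) = Z := by
    intro P Q Z h
    rw [← Matrix.mul_assoc, h, Matrix.one_mul]
  have mapdet : ∀ P : Matrix (Fin n) (Fin n) ℝ,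
      (P.map Complex.ofReal).det = (P.det : ℂ) := fun P =>
    (RingHom.map_det Complex.ofRealHom P).symm
  have hdetΘpm : Θ.det * Θ.det = 1 := by
    have h16 := congrArg Matrix.det hΘ
    rwa [Matrix.det_mul, Matrix.det_transpose, Matrix.det_one] at h16
  set J : Matrix (Fin n) (Fin n) ℝ :=
    Matrix.diagonal (fun j => if j = i₀ then Θ.det else 1) with hJdef
  have hJJ : J * J = 1 := by
    rw [hJdef, Matrix.diagonal_mul_diagonal,
      show (fun j => (if j = i₀ then Θ.det else 1) * (if j = i₀ then Θ.det else 1))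
          = fun _ => (1 : ℝ) from funext fun j => by by_cases h : j = i₀ <;> simp [h, hdetΘpm],
      Matrix.diagonal_one]
  have hJT : Jᵀ = J := by rw [hJdef, Matrix.diagonal_transpose]
  have hJdet : J.det = Θ.det := by
    rw [hJdef, Matrix.det_diagonal]
    simp [Finset.prod_ite_eq']
  set Θ₁ : Matrix (Fin n) (Fin n) ℝ := Θ * J with hΘ₁def
  have hΘ₁orthT : Θ₁ᵀ * Θ₁ = 1 := by
    rw [hΘ₁def, Matrix.transpose_mul, hJT, Matrix.mul_assoc, ← Matrix.mul_assoc Θᵀ Θ, hΘ,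
      Matrix.one_mul, hJJ]
  have hΘ₁det : Θ₁.det = 1 := by rw [hΘ₁def, Matrix.det_mul, hJdet, hdetΘpm]
  set Θ₂' : Matrix (Fin n) (Fin n) ℝ := J * Θ₂r with hΘ₂'def
  have hΘ₂'row : Θ₂' * Θ₂'ᵀ = 1 := by
    rw [hΘ₂'def, Matrix.transpose_mul, hJT]
    simp only [Matrix.mul_assoc]
    rw [cancelR _ _ _ hΘ₂orth, hJJ]
  have hε : Θ₂'.det * Θ₂'.det = 1 := by
    have h17 := congrArg Matrix.det hΘ₂'row
    rwa [Matrix.det_mul, Matrix.det_transpose, Matrix.det_one] at h17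
  set Jc : Matrix (Fin n) (Fin n) ℂ := J.map Complex.ofReal with hJcdef
  have hJcJc : Jc * Jc = 1 := by rw [hJcdef, ← mapmul, hJJ, mapone]
  have hJcD0 : Jc * D0 = D0 * Jc := by
    rw [hJcdef, hJdef, mapdiag, hD0def, Matrix.diagonal_mul_diagonal,
      Matrix.diagonal_mul_diagonal,
      show (fun j => ((if j = i₀ then Θ.det else 1 : ℝ) : ℂ) * e j)
        = fun j => e j * ((if j = i₀ then Θ.det else 1 : ℝ) : ℂ) from
        funext fun j => mul_comm _ _]
  have hfact2 : U = (Θ₁.map Complex.ofReal) * D0 * (Θ₂'.map Complex.ofReal) := by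
    rw [hΘ₁def, hΘ₂'def, mapmul, mapmul, hmap2, ← hΘcdef, ← hJcdef]
    have h18 : Θc * Jc * D0 * (Jc * Θ₂c) = Θc * D0 * Θ₂c := by
      calc Θc * Jc * D0 * (Jc * Θ₂c) = Θc * (Jc * (D0 * (Jc * Θ₂c))) := by
            simp only [Matrix.mul_assoc]
        _ = Θc * (Jc * (Jc * (D0 * Θ₂c))) := by
            rw [← Matrix.mul_assoc D0 Jc, ← hJcD0, Matrix.mul_assoc]
        _ = Θc * (D0 * Θ₂c) := by rw [cancel _ _ _ hJcJc]
        _ = Θc * D0 * Θ₂c := (Matrix.mul_assoc _ _ _).symm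
    rw [h18]
    exact hfact
  set sσ : ℝ := ∑ j, lam0 j with hsσdef
  have hdetD0 : D0.det = Complex.exp (-(Complex.I * (sσ : ℂ))) := by
    rw [hD0def, Matrix.det_diagonal, hedef, ← Complex.exp_sum]
    congr 1
    rw [hsσdef]
    push_cast
    rw [Finset.mul_sum]
    simp [Finset.sum_neg_distrib]
  have hdetU2 : (1 : ℂ) = (Θ₁.det : ℂ) * D0.det * ((Θ₂'.det : ℝ) : ℂ) := by
    rw [← hdet, hfact2, Matrix.det_mul, Matrix.det_mul, mapdet, mapdet]
  have hεc : ((Θ₂'.det : ℝ) : ℂ) * ((Θ₂'.det : ℝ) : ℂ) = 1 := by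
    rw [← Complex.ofReal_mul, hε, Complex.ofReal_one]
  have h20 : Complex.exp (-(Complex.I * (sσ : ℂ))) * ((Θ₂'.det : ℝ) : ℂ) = 1 := by
    rw [← hdetD0]
    rw [hΘ₁det] at hdetU2
    simpa using hdetU2.symm
  have hexpnegs : Complex.exp (-(Complex.I * (sσ : ℂ))) = ((Θ₂'.det : ℝ) : ℂ) := by
    calc Complex.exp (-(Complex.I * (sσ : ℂ)))
        = Complex.exp (-(Complex.I * (sσ : ℂ))) * (((Θ₂'.det : ℝ) : ℂ) * ((Θ₂'.det : ℝ) : ℂ)) := by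
          rw [hεc, mul_one]
      _ = (Complex.exp (-(Complex.I * (sσ : ℂ))) * ((Θ₂'.det : ℝ) : ℂ)) * ((Θ₂'.det : ℝ) : ℂ) := by
          ring
      _ = ((Θ₂'.det : ℝ) : ℂ) := by rw [h20, one_mul]
  have hexps : Complex.exp (Complex.I * (sσ : ℂ)) = ((Θ₂'.det : ℝ) : ℂ) := by
    have h21 : Complex.exp (Complex.I * (sσ : ℂ)) * Complex.exp (-(Complex.I * (sσ : ℂ))) = 1 := by
      rw [← Complex.exp_add]
      simp
    rw [hexpnegs] at h21
    calc Complex.exp (Complex.I * (sσ : ℂ))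
        = Complex.exp (Complex.I * (sσ : ℂ)) * (((Θ₂'.det : ℝ) : ℂ) * ((Θ₂'.det : ℝ) : ℂ)) := by
          rw [hεc, mul_one]
      _ = (Complex.exp (Complex.I * (sσ : ℂ)) * ((Θ₂'.det : ℝ) : ℂ)) * ((Θ₂'.det : ℝ) : ℂ) := by
          ring
      _ = ((Θ₂'.det : ℝ) : ℂ) := by rw [h21, one_mul]
  set lam : Fin n → ℝ := fun j => lam0 j - (if j = i₀ then sσ else 0) with hlamdef
  have hsumlam : ∑ j, lam j = 0 := by
    have h23 : ∑ j, (if j = i₀ then sσ else 0) = sσ := by simp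
    rw [hlamdef, Finset.sum_sub_distrib, h23, ← hsσdef, sub_self]
  set K : Matrix (Fin n) (Fin n) ℝ :=
    Matrix.diagonal (fun j => if j = i₀ then Θ₂'.det else 1) with hKdef
  have hKK : K * K = 1 := by
    rw [hKdef, Matrix.diagonal_mul_diagonal,
      show (fun j => (if j = i₀ then Θ₂'.det else 1) * (if j = i₀ then Θ₂'.det else 1))
          = fun _ => (1 : ℝ) from funext fun j => by by_cases h : j = i₀ <;> simp [h, hε],
      Matrix.diagonal_one]
  have hKT : Kᵀ = K := by rw [hKdef, Matrix.diagonal_transpose]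
  have hKdet : K.det = Θ₂'.det := by
    rw [hKdef, Matrix.det_diagonal]
    simp [Finset.prod_ite_eq']
  set Θ₂ : Matrix (Fin n) (Fin n) ℝ := K * Θ₂' with hΘ₂def
  have hΘ₂row : Θ₂ * Θ₂ᵀ = 1 := by
    rw [hΘ₂def, Matrix.transpose_mul, hKT]
    simp only [Matrix.mul_assoc]
    rw [cancelR _ _ _ hΘ₂'row, hKK]
  have hΘ₂det : Θ₂.det = 1 := by rw [hΘ₂def, Matrix.det_mul, hKdet, hε]
  set Kc : Matrix (Fin n) (Fin n) ℂ := K.map Complex.ofReal with hKcdef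
  set D : Matrix (Fin n) (Fin n) ℂ :=
    Matrix.diagonal (fun i => Complex.exp (-(Complex.I * ((lam i : ℝ) : ℂ)))) with hDdef
  have hentry : e = fun j => Complex.exp (-(Complex.I * ((lam j : ℝ) : ℂ)))
      * (((if j = i₀ then Θ₂'.det else 1) : ℝ) : ℂ) := by
    funext j
    by_cases h : j = i₀
    · rw [if_pos h]
      simp only [hedef, hlamdef, if_pos h]
      rw [show -(Complex.I * ((lam0 j - sσ : ℝ) : ℂ))
          = -(Complex.I * ((lam0 j : ℝ) : ℂ)) + Complex.I * (sσ : ℂ) from by push_cast; ring,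
        Complex.exp_add, hexps, mul_assoc, hεc, mul_one]
    · rw [if_neg h]
      simp only [hedef, hlamdef, if_neg h]
      simp
  have hD0DK : D0 = D * Kc := by
    rw [hD0def, hDdef, hKcdef, hKdef, mapdiag, Matrix.diagonal_mul_diagonal, hentry]
  have hfinal : U = (Θ₁.map Complex.ofReal) * D * (Θ₂.map Complex.ofReal) := by
    have hKmap : Θ₂.map Complex.ofReal = Kc * (Θ₂'.map Complex.ofReal) := by
      rw [hΘ₂def, mapmul, hKcdef]
    calc U = (Θ₁.map Complex.ofReal) * (D * Kc) * (Θ₂'.map Complex.ofReal) := by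
          rw [← hD0DK]; exact hfact2
      _ = (Θ₁.map Complex.ofReal) * D * (Kc * (Θ₂'.map Complex.ofReal)) := by
          simp only [Matrix.mul_assoc]
      _ = (Θ₁.map Complex.ofReal) * D * (Θ₂.map Complex.ofReal) := by rw [hKmap]
  have horthmem : ∀ P : Matrix (Fin n) (Fin n) ℝ, P * Pᵀ = 1 →
      P ∈ Matrix.orthogonalGroup (Fin n) ℝ := by
    intro P h
    rw [Matrix.mem_orthogonalGroup_iff]
    exact h
  exact ⟨Θ₁, Θ₂, lam, horthmem _ (mul_eq_one_comm.mp hΘ₁orthT), hΘ₁det,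
    horthmem _ hΘ₂row, hΘ₂det, hsumlam, hfinal⟩
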